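/- The function f satisfies |f(z)| = 1 for every z ∈ ℂ^d, and f(z + λ) = ρ(λ) · f(z) for every z ∈ ℂ^d and every λ ∈ Λ. In particular, f descends to a nowhere-vanishing unit-modulus section of the flat line bundle on ℂ^d/Λ determined by the representation ρ. -/

import Mathlib

/-- The real `(2d)×(2d)` matrix `A_Λ` whose `k`-th row is
`(Re((λ_k)_1), …, Re((λ_k)_d), Im((λ_k)_1), …, Im((λ_k)_d))`. -/
noncomputable def AΛ (d : ℕ) (lam : Fin (d + d) → Fin d → ℂ) :
    Matrix (Fin (d + d)) (Fin (d + d)) ℝ :=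
  fun k j =>
    Fin.addCases (motive := fun _ => ℝ) (fun i => (lam k i).re) (fun i => (lam k i).im) j

/-- The `ℝ`-linear map `B(a_1,…,a_d,b_1,…,b_d) := ((a_1 + i b_1)/2, …, (a_d + i b_d)/2)`. -/
noncomputable def Bmap (d : ℕ) (v : Fin (d + d) → ℝ) : Fin d → ℂ :=
  fun j => ((v (Fin.castAdd d j) : ℂ) + Complex.I * (v (Fin.natAdd d j) : ℂ)) / 2

/-- For a vector `s` of purely imaginary complex numbers, `c(s) := i·B(A_Λ⁻¹(−i s)) ∈ ℂ^d`. -/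
noncomputable def cmap (d : ℕ) (lam : Fin (d + d) → Fin d → ℂ)
    (s : Fin (d + d) → ℂ) : Fin d → ℂ :=
  fun j => Complex.I *
    Bmap d ((AΛ d lam)⁻¹.mulVec (fun k => ((-Complex.I) * s k).re)) j

/-- The lattice `Λ := ℤλ_1 + ⋯ + ℤλ_{2d}`, as an additive subgroup of `ℂ^d`. -/
noncomputable def LamSubgroup (d : ℕ) (lam : Fin (d + d) → Fin d → ℂ) :
    AddSubgroup (Fin d → ℂ) :=
  AddSubgroup.closure (Set.range lam)

/-- The function `f(z) := exp( −Σ_j conj(c_j) z_j + Σ_j c_j conj(z_j) )`. -/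
noncomputable def sectionF (d : ℕ) (c : Fin d → ℂ) (z : Fin d → ℂ) : ℂ :=
  Complex.exp
    (-(∑ j : Fin d, (starRingEnd ℂ) (c j) * z j) +
      ∑ j : Fin d, c j * (starRingEnd ℂ) (z j))

/-- The exponent appearing in `sectionF`. -/
noncomputable def expE (d : ℕ) (c : Fin d → ℂ) (z : Fin d → ℂ) : ℂ :=
  -(∑ j : Fin d, (starRingEnd ℂ) (c j) * z j) + ∑ j : Fin d, c j * (starRingEnd ℂ) (z j)

lemma expE_re (d : ℕ) (c z : Fin d → ℂ) : (expE d c z).re = 0 := by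
  have h : (∑ j : Fin d, c j * (starRingEnd ℂ) (z j)) =
      (starRingEnd ℂ) (∑ j : Fin d, (starRingEnd ℂ) (c j) * z j) := by
    rw [map_sum]; simp [mul_comm]
  rw [expE, h]
  simp [Complex.add_re]

lemma expE_add (d : ℕ) (c z w : Fin d → ℂ) :
    expE d c (z + w) = expE d c z + expE d c w := by
  simp only [expE, Pi.add_apply, map_add, mul_add, add_mul, Finset.sum_add_distrib]
  ring

lemma expE_neg (d : ℕ) (c z : Fin d → ℂ) : expE d c (-z) = -expE d c z := by
  simp only [expE, Pi.neg_apply, map_neg, mul_neg, neg_mul, Finset.sum_neg_distrib]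
  ring

lemma expE_zero (d : ℕ) (c : Fin d → ℂ) : expE d c 0 = 0 := by
  simp [expE]

lemma AΛ_isUnit_det (d : ℕ) (lam : Fin (d + d) → Fin d → ℂ)
    (hlam : LinearIndependent ℝ lam) : IsUnit (AΛ d lam).det := by
  rw [← Matrix.isUnit_iff_isUnit_det, ← Matrix.vecMul_injective_iff_isUnit]
  intro u1 u2 h
  have hsum : ∑ k, (u1 k - u2 k) • lam k = 0 := by
    funext j
    rw [Finset.sum_apply, Pi.zero_apply]
    apply Complex.ext
    · have := congrFun h (Fin.castAdd d j)
      simp only [Matrix.vecMul, dotProduct, AΛ, Fin.addCases_left] at this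
      simp only [Complex.re_sum, Complex.zero_re, Pi.smul_apply, Complex.real_smul,
        Complex.mul_re, Complex.ofReal_re, Complex.ofReal_im, zero_mul, sub_zero]
      simp only [sub_mul]
      rw [Finset.sum_sub_distrib, this, sub_self]
    · have := congrFun h (Fin.natAdd d j)
      simp only [Matrix.vecMul, dotProduct, AΛ, Fin.addCases_right] at this
      simp only [Complex.im_sum, Complex.zero_im, Pi.smul_apply, Complex.real_smul,
        Complex.mul_im, Complex.ofReal_re, Complex.ofReal_im, zero_mul, add_zero]
      simp only [sub_mul]
      rw [Finset.sum_sub_distrib, this, sub_self]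
  have h0 := Fintype.linearIndependent_iff.mp hlam _ hsum
  funext k
  have hk := h0 k
  linarith

lemma term_key (a b : ℝ) (w : ℂ) :
    (Complex.I * (((a:ℂ) + Complex.I * (b:ℂ)) / 2)) * (starRingEnd ℂ) w
      - (starRingEnd ℂ) (Complex.I * (((a:ℂ) + Complex.I * (b:ℂ)) / 2)) * w
    = Complex.I * ((a * w.re + b * w.im : ℝ) : ℂ) := by
  simp only [Complex.ext_iff, Complex.mul_re, Complex.mul_im, Complex.add_re, Complex.add_im,
    Complex.sub_re, Complex.sub_im, Complex.div_re, Complex.div_im, Complex.normSq_apply,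
    Complex.I_re, Complex.I_im, Complex.conj_re, Complex.conj_im, Complex.ofReal_re,
    Complex.ofReal_im, Complex.re_ofNat, Complex.im_ofNat]
  constructor <;> ring

lemma expE_lam (d : ℕ) (lam : Fin (d + d) → Fin d → ℂ)
    (hlam : LinearIndependent ℝ lam)
    (s : Fin (d + d) → ℂ) (hs : ∀ k, (s k).re = 0) (k : Fin (d + d)) :
    expE d (cmap d lam s) (lam k) = s k := by
  set v : Fin (d + d) → ℝ := fun m => ((-Complex.I) * s m).re with hv
  set u : Fin (d + d) → ℝ := (AΛ d lam)⁻¹.mulVec v with hu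
  have hAu : (AΛ d lam).mulVec u = v := by
    rw [hu, Matrix.mulVec_mulVec, Matrix.mul_nonsing_inv _ (AΛ_isUnit_det d lam hlam),
      Matrix.one_mulVec]
  have hc : ∀ j, cmap d lam s j =
      Complex.I * (((u (Fin.castAdd d j) : ℝ) : ℂ) + Complex.I * ((u (Fin.natAdd d j) : ℝ) : ℂ)) / 2 := by
    intro j
    simp only [cmap, Bmap, hu, hv]
    ring
  have step1 : expE d (cmap d lam s) (lam k) =
      ∑ j : Fin d, (cmap d lam s j * (starRingEnd ℂ) (lam k j)
        - (starRingEnd ℂ) (cmap d lam s j) * lam k j) := by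
    rw [expE, Finset.sum_sub_distrib]
    ring
  rw [step1]
  have step2 : ∀ j : Fin d, cmap d lam s j * (starRingEnd ℂ) (lam k j)
        - (starRingEnd ℂ) (cmap d lam s j) * lam k j
      = Complex.I * ((u (Fin.castAdd d j) * (lam k j).re
          + u (Fin.natAdd d j) * (lam k j).im : ℝ) : ℂ) := by
    intro j
    rw [hc j]
    have := term_key (u (Fin.castAdd d j)) (u (Fin.natAdd d j)) (lam k j)
    rw [← this]
    ring_nf
  simp only [step2]
  rw [← Finset.mul_sum, ← Complex.ofReal_sum]
  have hmul : ∑ j : Fin d, (u (Fin.castAdd d j) * (lam k j).re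
      + u (Fin.natAdd d j) * (lam k j).im) = v k := by
    rw [← hAu]
    simp only [Matrix.mulVec, dotProduct]
    rw [Fin.sum_univ_add]
    simp only [AΛ, Fin.addCases_left, Fin.addCases_right]
    rw [← Finset.sum_add_distrib]
    exact Finset.sum_congr rfl (fun j _ => by ring)
  rw [hmul, hv]
  apply Complex.ext <;>
    simp [Complex.mul_re, Complex.mul_im, hs k]

/-- The function `f` satisfies `|f(z)| = 1` for every `z ∈ ℂ^d`, and
`f(z + λ) = ρ(λ)·f(z)` for every `z ∈ ℂ^d` and every `λ ∈ Λ`; thus `f` descends to a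
nowhere-vanishing unit-modulus section of the flat line bundle determined by `ρ`. -/
theorem sectionF_unit_and_equivariant (d : ℕ) (hd : 0 < d)
    (lam : Fin (d + d) → Fin d → ℂ)
    (hlam : LinearIndependent ℝ lam)
    (hspan : Submodule.span ℝ (Set.range lam) = ⊤)
    (ρ : AddChar (LamSubgroup d lam) Circle)
    (s : Fin (d + d) → ℂ) (hs : ∀ k, (s k).re = 0)
    (hρ : ∀ k, Complex.exp (s k) =
      (ρ ⟨lam k, AddSubgroup.subset_closure (Set.mem_range_self k)⟩ : ℂ)) :
    (∀ z : Fin d → ℂ, ‖sectionF d (cmap d lam s) z‖ = 1) ∧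
    ∀ (z : Fin d → ℂ) (l : Fin d → ℂ) (hl : l ∈ LamSubgroup d lam),
      sectionF d (cmap d lam s) (z + l) =
        (ρ ⟨l, hl⟩ : ℂ) * sectionF d (cmap d lam s) z := by
  set c := cmap d lam s with hcdef
  have hsec : ∀ z, sectionF d c z = Complex.exp (expE d c z) := fun z => rfl
  constructor
  · intro z
    rw [hsec, Complex.norm_exp, expE_re, Real.exp_zero]
  · have hkey : ∀ (l : Fin d → ℂ) (hl : l ∈ LamSubgroup d lam),
        Complex.exp (expE d c l) = (ρ ⟨l, hl⟩ : ℂ) := by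
      intro l hl
      induction hl using AddSubgroup.closure_induction with
      | mem x hx =>
        obtain ⟨k, rfl⟩ := hx
        rw [expE_lam d lam hlam s hs k, hρ k]
      | zero =>
        rw [expE_zero, Complex.exp_zero]
        have h0 : (⟨(0 : Fin d → ℂ), zero_mem _⟩ : LamSubgroup d lam) = 0 := rfl
        rw [h0, AddChar.map_zero_eq_one, Circle.coe_one]
      | add x y hx hy ihx ihy =>
        rw [expE_add, Complex.exp_add, ihx, ihy]
        have : (⟨x + y, add_mem hx hy⟩ : LamSubgroup d lam) = ⟨x, hx⟩ + ⟨y, hy⟩ := rfl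
        rw [this, AddChar.map_add_eq_mul, Circle.coe_mul]
      | neg x hx ihx =>
        rw [expE_neg, Complex.exp_neg, ihx]
        have : (⟨-x, neg_mem hx⟩ : LamSubgroup d lam) = -⟨x, hx⟩ := rfl
        rw [this, AddChar.map_neg_eq_inv]
        simp
    intro z l hl
    rw [hsec, hsec, expE_add, Complex.exp_add, hkey l hl]
    ring
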